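/- arXiv:1305.6601 — 2 statements merged into one kernel-verified Lean document; each statement's English description precedes it below -/
import Mathlib

section
/- Let f : I ⊆ (0,∞) → (0,∞) be differentiable on I°, let a, b ∈ I° with a < b, f' integrable on [a,b], and suppose |f'|^q is s-geometrically convex on [a,b] for some q ≥ 1 and s ∈ (0,1]. If |f'(a)| ≤ 1 ≤ |f'(b)|, then |(f(a)+f(b))/2 − (1/(ln b − ln a)) ∫_a^b f(x)/x dx| ≤ ln(b/a) · (1/2)^{2−1/q} · [ a|f'(a)|^s |f'(b)|^{1−s} g₁(θ₁)^{1/q} + b|f'(b)| g₁(θ₂)^{1/q} ]. -/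
open Real MeasureTheory Set

/-- `g` is `s`-geometrically convex on `J`. -/
def SGeometricallyConvexOn (s : ℝ) (J : Set ℝ) (g : ℝ → ℝ) : Prop :=
  ∀ x ∈ J, ∀ y ∈ J, ∀ t ∈ Set.Icc (0:ℝ) 1,
    g (x ^ t * y ^ (1 - t)) ≤ g x ^ t ^ s * g y ^ (1 - t) ^ s

noncomputable def g₁ (u : ℝ) : ℝ :=
  if u = 1 then 1/2 else (u * Real.log u - u + 1) / (Real.log u) ^ 2

noncomputable def g₂ (u : ℝ) : ℝ :=
  if u = 1 then 1 else (u - 1) / Real.log u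

lemma const_rpow_cont' {u : ℝ} (hu : 0 < u) : Continuous fun t : ℝ => u ^ t := by
  have : (fun t : ℝ => u ^ t) = fun t => Real.exp (Real.log u * t) :=
    funext fun t => Real.rpow_def_of_pos hu t
  rw [this]; exact Real.continuous_exp.comp (continuous_const.mul continuous_id)

lemma g1_int' {u : ℝ} (hu : 0 < u) : ∫ t in (0:ℝ)..1, t * u ^ t = g₁ u := by
  by_cases h1 : u = 1
  · subst h1
    simp [g₁, integral_id]
  · have hlu : Real.log u ≠ 0 := Real.log_ne_zero_of_pos_of_ne_one hu h1
    have hG : ∀ t : ℝ, HasDerivAt (fun t : ℝ => t * u ^ t / Real.log u - u ^ t / (Real.log u) ^ 2)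
        (t * u ^ t) t := by
      intro t
      have hH : HasDerivAt (fun t : ℝ => u ^ t) (u ^ t * Real.log u) t :=
        (Real.hasStrictDerivAt_const_rpow hu t).hasDerivAt
      have h2 : HasDerivAt (fun t : ℝ => t * u ^ t) (1 * u ^ t + t * (u ^ t * Real.log u)) t :=
        (hasDerivAt_id t).mul hH
      have := (h2.div_const (Real.log u)).sub (hH.div_const ((Real.log u) ^ 2))
      refine this.congr_deriv ?_
      field_simp
      ring
    have hcont : Continuous fun t : ℝ => t * u ^ t := continuous_id.mul (const_rpow_cont' hu)
    rw [intervalIntegral.integral_eq_sub_of_hasDerivAt (fun t _ => hG t)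
      (hcont.intervalIntegrable 0 1)]
    simp only [g₁, if_neg h1, Real.rpow_one, Real.rpow_zero]
    field_simp
    ring

lemma g1_int'' {u : ℝ} (hu : 0 < u) : ∫ t in (0:ℝ)..1, (1 - t) * u ^ (1 - t) = g₁ u := by
  have := intervalIntegral.integral_comp_sub_left (a := 0) (b := 1) (fun τ => τ * u ^ τ) 1
  simp only [sub_self, sub_zero] at this
  rw [this, g1_int' hu]

lemma g1_nonneg' {u : ℝ} (hu : 0 ≤ u) : 0 ≤ g₁ u := by
  rcases eq_or_lt_of_le hu with h | h
  · simp [g₁, ← h, Real.log_zero]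
  · rw [← g1_int' h]
    apply intervalIntegral.integral_nonneg (by norm_num)
    intro t ht
    exact mul_nonneg ht.1 (Real.rpow_nonneg h.le t)

lemma holder_aux' {q : ℝ} (hq : 1 ≤ q) {w h : ℝ → ℝ} (hwc : Continuous w) (hhc : Continuous h)
    (hw0 : ∀ t, 0 ≤ w t) (hh0 : ∀ t, 0 ≤ h t) (hwhalf : ∫ t in (0:ℝ)..1, w t = 1/2) :
    ∫ t in (0:ℝ)..1, w t * h t ≤
      (1/2 : ℝ) ^ (1 - 1/q) * (∫ t in (0:ℝ)..1, w t * h t ^ q) ^ (1/q) := by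
  rcases eq_or_lt_of_le hq with h1 | h1
  · subst h1
    simp only [Real.rpow_one, sub_self, Real.rpow_zero, one_mul, ne_eq, one_ne_zero,
      not_false_iff, div_self, Real.rpow_one]
    norm_num
  · set p : ℝ := Real.conjExponent q with hp
    have hpq : p.HolderConjugate q := (Real.HolderConjugate.conjExponent h1).symm
    have hq0 : (0:ℝ) < q := lt_trans one_pos h1
    have hp0 : (0:ℝ) < p := hpq.pos
    have hsum : 1/p + 1/q = 1 := by rw [one_div, one_div, hpq.inv_add_inv_eq_one]
    set μ : Measure ℝ := volume.restrict (Set.Ioc (0:ℝ) 1) with hμ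
    haveI : IsFiniteMeasure μ := by
      constructor
      rw [hμ, Measure.restrict_apply_univ, Real.volume_Ioc]
      exact ENNReal.ofReal_lt_top
    set F : ℝ → ℝ := fun t => w t ^ (1/p) with hF
    set G : ℝ → ℝ := fun t => w t ^ (1/q) * h t with hG
    have hFc : Continuous F := hwc.rpow_const (fun x => Or.inr (by positivity))
    have hGc : Continuous G := (hwc.rpow_const (fun x => Or.inr (by positivity))).mul hhc
    have memLp : ∀ (g : ℝ → ℝ), Continuous g → ∀ r : ℝ, MemLp g (ENNReal.ofReal r) μ := by
      intro g hg r
      obtain ⟨C, hC⟩ := (isCompact_Icc (a := (0:ℝ)) (b := 1)).exists_bound_of_continuousOn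
        hg.continuousOn
      exact MemLp.of_bound hg.aestronglyMeasurable C
        ((ae_restrict_iff' measurableSet_Ioc).mpr
          (ae_of_all _ fun x hx => hC x (Ioc_subset_Icc_self hx)))
    have key := MeasureTheory.integral_mul_le_Lp_mul_Lq_of_nonneg (μ := μ) hpq
      (f := F) (g := G) (ae_of_all _ fun t => Real.rpow_nonneg (hw0 t) _)
      (ae_of_all _ fun t => mul_nonneg (Real.rpow_nonneg (hw0 t) _) (hh0 t))
      (memLp F hFc p) (memLp G hGc q)
    have e1 : ∀ t, F t * G t = w t * h t := by
      intro t
      simp only [hF, hG]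
      rw [← mul_assoc, ← Real.rpow_add' (hw0 t) (by rw [hsum]; norm_num), hsum, Real.rpow_one]
    have e2 : ∀ t, F t ^ p = w t := by
      intro t
      simp only [hF]
      rw [← Real.rpow_mul (hw0 t), one_div_mul_cancel hp0.ne', Real.rpow_one]
    have e3 : ∀ t, G t ^ q = w t * h t ^ q := by
      intro t
      simp only [hG]
      rw [Real.mul_rpow (Real.rpow_nonneg (hw0 t) _) (hh0 t), ← Real.rpow_mul (hw0 t),
        one_div_mul_cancel hq0.ne', Real.rpow_one]
    simp only [e1, e2, e3] at key
    have hioc : ∀ (g : ℝ → ℝ), ∫ t in (0:ℝ)..1, g t = ∫ t, g t ∂μ := fun g =>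
      intervalIntegral.integral_of_le zero_le_one
    rw [hioc, hioc] at *
    rw [hwhalf] at key
    have : 1/p = 1 - 1/q := by linarith
    rw [← this]
    exact key

theorem stmt_4
    (I : Set ℝ) (hI : I.OrdConnected) (hIpos : I ⊆ Set.Ioi (0:ℝ))
    (f f' : ℝ → ℝ) (hfpos : ∀ x ∈ I, 0 < f x)
    (a b : ℝ) (ha : a ∈ interior I) (hb : b ∈ interior I) (hab : a < b)
    (hdiff : ∀ x ∈ interior I, HasDerivAt f (f' x) x)
    (hint : IntervalIntegrable f' volume a b)
    (q s : ℝ) (hq : 1 ≤ q) (hs : s ∈ Set.Ioc (0:ℝ) 1)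
    (hconv : SGeometricallyConvexOn s (Set.Icc a b) (fun x => |f' x| ^ q))
    (hfa : |f' a| ≤ 1) (hfb : 1 ≤ |f' b|) :
    |(f a + f b) / 2 - (1 / (Real.log b - Real.log a)) * ∫ x in a..b, f x / x| ≤
      Real.log (b / a) * (1 / 2 : ℝ) ^ (2 - 1 / q) *
        (a * |f' a| ^ s * |f' b| ^ (1 - s) * (g₁ ((b * |f' b| ^ s / (a * |f' a| ^ s)) ^ (q))) ^ (1 / q)
         + b * |f' b| * (g₁ ((a * |f' a| ^ s / (b * |f' b| ^ s)) ^ (q))) ^ (1 / q)) := by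
  have hIcc : Set.Icc a b ⊆ interior I := hI.interior.out ha hb
  have ha0 : 0 < a := hIpos (interior_subset ha)
  have hb0 : 0 < b := lt_trans ha0 hab
  have hq0 : (0:ℝ) < q := lt_of_lt_of_le one_pos hq
  have hs0 : (0:ℝ) < s := hs.1
  have hs1 : s ≤ 1 := hs.2
  have hM0 : (0:ℝ) < |f' b| := lt_of_lt_of_le one_pos hfb
  set m : ℝ := |f' a| with hmdef
  set M : ℝ := |f' b| with hMdef
  set L : ℝ := Real.log b - Real.log a with hLdef
  have hL : 0 < L := sub_pos.mpr (Real.log_lt_log ha0 hab)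
  set A : ℝ → ℝ := fun t => Real.exp (Real.log b - t * L) with hAdef
  have hA0 : ∀ t, 0 < A t := fun t => Real.exp_pos _
  have hAa : A 1 = a := by
    simp only [hAdef, one_mul, hLdef]
    rw [show Real.log b - (Real.log b - Real.log a) = Real.log a by ring, Real.exp_log ha0]
  have hAb : A 0 = b := by simp [hAdef, Real.exp_log hb0]
  have hArpow : ∀ t, A t = a ^ t * b ^ (1 - t) := by
    intro t
    rw [Real.rpow_def_of_pos ha0, Real.rpow_def_of_pos hb0, ← Real.exp_add, hAdef, hLdef]
    ring_nf
  have hAmem : ∀ t ∈ Set.Icc (0:ℝ) 1, A t ∈ Set.Icc a b := by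
    intro t ht
    constructor
    · rw [← hAa]
      apply Real.exp_le_exp.mpr
      nlinarith [ht.2, hL]
    · rw [← hAb]
      apply Real.exp_le_exp.mpr
      nlinarith [ht.1, hL]
  have hA' : ∀ t, HasDerivAt A (-L * A t) t := by
    intro t
    have h1 : HasDerivAt (fun t : ℝ => Real.log b - t * L) (-L) t := by
      exact (((hasDerivAt_id t).mul_const L).const_sub (Real.log b)).congr_deriv (by ring)
    have := h1.exp
    convert this using 1
    ring
  have hAcont : Continuous A := Real.continuous_exp.comp (by continuity)
  have hInjA : Set.InjOn A (Set.Icc 0 1) := by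
    intro x _ y _ hxy
    have := Real.exp_injective hxy
    have : x * L = y * L := by linarith
    exact mul_right_cancel₀ hL.ne' this
  have hImA : A '' (Set.Icc 0 1) = Set.Icc a b := by
    apply Set.Subset.antisymm
    · rintro _ ⟨t, ht, rfl⟩; exact hAmem t ht
    · rintro y ⟨hy1, hy2⟩
      have hy0 : 0 < y := lt_of_lt_of_le ha0 hy1
      refine ⟨(Real.log b - Real.log y) / L, ⟨?_, ?_⟩, ?_⟩
      · apply div_nonneg _ hL.le
        have := Real.log_le_log hy0 hy2
        linarith
      · rw [div_le_one hL]
        have := Real.log_le_log ha0 hy1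
        simp only [hLdef]; linarith
      · simp only [hAdef]
        rw [div_mul_cancel₀ _ hL.ne']
        rw [show Real.log b - (Real.log b - Real.log y) = Real.log y by ring, Real.exp_log hy0]
  have hfc : ContinuousOn f (Set.Icc a b) := fun x hx =>
    (hdiff x (hIcc hx)).continuousAt.continuousWithinAt
  set F : ℝ → ℝ := fun t => f (A t) with hFdef
  set F' : ℝ → ℝ := fun t => f' (A t) * (-L * A t) with hF'def
  have hF' : ∀ t ∈ Set.uIcc (0:ℝ) 1, HasDerivAt F (F' t) t := by
    intro t ht
    rw [Set.uIcc_of_le zero_le_one] at ht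
    exact (hdiff (A t) (hIcc (hAmem t ht))).comp t (hA' t)
  have hintIcc : IntegrableOn f' (Set.Icc a b) volume :=
    (intervalIntegrable_iff_integrableOn_Icc_of_le hab.le).mp hint
  have hkey : IntegrableOn (fun t => |(-L * A t)| • f' (A t)) (Set.Icc (0:ℝ) 1) volume := by
    rw [← integrableOn_image_iff_integrableOn_abs_deriv_smul measurableSet_Icc
      (fun t _ => (hA' t).hasDerivWithinAt) hInjA f']
    rwa [hImA]
  have hF'int : IntervalIntegrable F' volume 0 1 := by
    apply IntegrableOn.intervalIntegrable
    rw [Set.uIcc_of_le zero_le_one]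
    apply IntegrableOn.congr_fun hkey.neg _ measurableSet_Icc
    intro t _
    simp only [hF'def, smul_eq_mul, Pi.neg_apply]
    rw [neg_mul, abs_neg, abs_of_pos (by positivity : (0:ℝ) < L * A t)]
    ring
  have hCOV : ∫ x in a..b, f x / x = L * ∫ t in (0:ℝ)..1, F t := by
    have hgc : ContinuousOn (fun x => f x / x) (A '' Set.uIcc 0 1) := by
      rw [Set.uIcc_of_le zero_le_one, hImA]
      exact hfc.div continuousOn_id (fun x hx => ne_of_gt (lt_of_lt_of_le ha0 hx.1))
    have h' : ContinuousOn (fun t => -L * A t) (Set.uIcc (0:ℝ) 1) :=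
      (continuous_const.mul hAcont).continuousOn
    have hsub := intervalIntegral.integral_comp_smul_deriv' (a := 0) (b := 1)
      (f := A) (f' := fun t => -L * A t) (g := fun x => f x / x)
      (fun t _ => hA' t) h' hgc
    rw [hAa, hAb] at hsub
    have e : Set.EqOn (fun t => (-L * A t) • ((fun x => f x / x) ∘ A) t)
        (fun t => -L * F t) (Set.uIcc (0:ℝ) 1) := by
      intro t _
      simp only [Function.comp, smul_eq_mul, hFdef]
      field_simp [(hA0 t).ne']
    rw [intervalIntegral.integral_congr e, intervalIntegral.integral_const_mul] at hsub
    have hba : (∫ x in b..a, (fun x => f x / x) x) = - ∫ x in a..b, f x / x :=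
      intervalIntegral.integral_symm a b
    rw [hba] at hsub
    linarith [hsub]
  have hIBP : ∫ t in (0:ℝ)..1, (1 - 2*t) * F' t
      = -(f a) - f b + 2 * ∫ t in (0:ℝ)..1, F t := by
    have hu : ∀ t ∈ Set.uIcc (0:ℝ) 1,
        HasDerivAt (fun t : ℝ => 1 - 2*t) ((fun _ : ℝ => (-2:ℝ)) t) t := by
      intro t _
      exact (((hasDerivAt_id t).const_mul (2:ℝ)).const_sub (1:ℝ)).congr_deriv (by norm_num)
    have hibp := intervalIntegral.integral_mul_deriv_eq_deriv_mul hu hF'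
      ((continuous_const).intervalIntegrable 0 1) hF'int
    rw [intervalIntegral.integral_congr (fun t _ => rfl :
      Set.EqOn (fun t => (fun _ : ℝ => (-2:ℝ)) t * F t) (fun t => (-2:ℝ) * F t) (Set.uIcc 0 1)),
      intervalIntegral.integral_const_mul] at hibp
    rw [hibp]
    simp only [hFdef, hAa, hAb]
    ring
  have hD : (f a + f b)/2 - (1/L) * ∫ x in a..b, f x / x
      = -(1/2) * ∫ t in (0:ℝ)..1, (1 - 2*t) * F' t := by
    rw [hIBP, hCOV]
    field_simp
    ring
  set X : ℝ → ℝ := fun t => A t * |f' (A t)| with hXdef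
  have hXint : IntervalIntegrable X volume 0 1 := by
    apply IntegrableOn.intervalIntegrable
    rw [Set.uIcc_of_le zero_le_one]
    have h1 : IntegrableOn (fun t => (1/L) * |(|(-L * A t)| • f' (A t))|) (Set.Icc (0:ℝ) 1)
        volume := (hkey.abs).const_mul (1/L)
    apply IntegrableOn.congr_fun h1 _ measurableSet_Icc
    intro t _
    simp only [smul_eq_mul, abs_mul, abs_abs, hXdef]
    rw [abs_neg, abs_of_pos hL, abs_of_pos (hA0 t)]
    field_simp
  by_cases hm : m = 0
  · -- degenerate case : f' vanishes on the interior, so f is constant and lhs is 0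
    have hf'zero : ∀ y ∈ Set.Ioo a b, f' y = 0 := by
      intro y hy
      have hyIm : y ∈ A '' Set.Icc 0 1 := by
        rw [hImA]; exact Set.mem_Icc.mpr ⟨hy.1.le, hy.2.le⟩
      obtain ⟨t, ht, rfl⟩ := hyIm
      have ht0 : 0 < t := by
        rcases lt_or_eq_of_le ht.1 with h | h
        · exact h
        · exfalso; rw [← h, hAb] at hy; exact lt_irrefl b hy.2
      have hc := hconv a ⟨le_refl a, hab.le⟩ b ⟨hab.le, le_refl b⟩ t ht
      rw [← hArpow t] at hc
      have hc2 : |f' (A t)| ^ q ≤ (|f' a| ^ q) ^ t ^ s * (|f' b| ^ q) ^ (1 - t) ^ s := hc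
      have hm' : |f' a| = 0 := hm
      rw [hm'] at hc2
      rw [Real.zero_rpow hq0.ne', Real.zero_rpow (ne_of_gt (Real.rpow_pos_of_pos ht0 s))] at hc2
      simp only [zero_mul] at hc2
      have h0 : |f' (A t)| ^ q ≤ 0 := hc2
      by_contra hne
      have : 0 < |f' (A t)| := abs_pos.mpr hne
      exact absurd (Real.rpow_pos_of_pos this q) (not_lt.mpr h0)
    have hconst : ∀ x ∈ Set.Icc a b, f x = f a := by
      intro x hx
      rcases eq_or_lt_of_le hx.1 with h | h
      · rw [← h]
      · obtain ⟨c, hc, hc'⟩ := exists_hasDerivAt_eq_slope f f' h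
          (hfc.mono (Set.Icc_subset_Icc le_rfl hx.2))
          (fun y hy => hdiff y (hIcc ⟨hy.1.le, le_trans hy.2.le hx.2⟩))
        rw [hf'zero c ⟨hc.1, lt_of_lt_of_le hc.2 hx.2⟩] at hc'
        have := hc'.symm
        rw [div_eq_zero_iff] at this
        rcases this with h1 | h1
        · linarith [sub_eq_zero.mp h1]
        · exact absurd h1 (sub_ne_zero.mpr (ne_of_gt h))
    have hIntconst : ∫ x in a..b, f x / x = f a * L := by
      have e : Set.EqOn (fun x => f x / x) (fun x => f a * x⁻¹) (Set.uIcc a b) := by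
        intro x hx
        rw [Set.uIcc_of_le hab.le] at hx
        simp only [hconst x hx]
        rw [div_eq_mul_inv]
      rw [intervalIntegral.integral_congr e, intervalIntegral.integral_const_mul,
        integral_inv (by rw [Set.uIcc_of_le hab.le]; intro h0; linarith [h0.1]),
        Real.log_div hb0.ne' ha0.ne']
    have hfba : f b = f a := hconst b ⟨hab.le, le_refl b⟩
    have hms : m ^ s = 0 := by rw [hm, Real.zero_rpow hs0.ne']
    have hθ₂ : (a * m ^ s / (b * M ^ s)) ^ q = 0 := by
      rw [hms, mul_zero, zero_div, Real.zero_rpow hq0.ne']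
    have hθ₁ : (b * M ^ s / (a * m ^ s)) ^ q = 0 := by
      rw [hms, mul_zero, div_zero, Real.zero_rpow hq0.ne']
    have hg0 : g₁ 0 = 0 := by simp [g₁, Real.log_zero]
    rw [hθ₂, hθ₁, hg0, Real.zero_rpow (one_div_ne_zero hq0.ne'), hIntconst, hfba]
    rw [show (f a + f a)/2 - 1/L * (f a * L) = 0 by field_simp; ring]
    simp
  · -- main case : m > 0
    have hm0 : (0:ℝ) < m := lt_of_le_of_ne (abs_nonneg _) (Ne.symm hm)
    -- pointwise exponent bounds
    have aux1 : ∀ t ∈ Set.Icc (0:ℝ) 1, s * t ≤ t ^ s := by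
      intro t ht
      rcases eq_or_lt_of_le ht.1 with h | h
      · rw [← h, mul_zero, Real.zero_rpow hs0.ne']
      · have h1 : t ^ (1:ℝ) ≤ t ^ s := Real.rpow_le_rpow_of_exponent_ge h ht.2 hs1
        rw [Real.rpow_one] at h1
        nlinarith
    have aux2 : ∀ t ∈ Set.Icc (0:ℝ) 1, (1 - t) ^ s ≤ 1 - s * t := by
      intro t ht
      have := Real.geom_mean_le_arith_mean2_weighted hs0.le (by linarith : (0:ℝ) ≤ 1 - s)
        (by linarith [ht.1, ht.2] : (0:ℝ) ≤ 1 - t) zero_le_one (by ring)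
      rw [Real.one_rpow, mul_one] at this
      linarith [ht.1, ht.2]
    have hpt : ∀ t ∈ Set.Icc (0:ℝ) 1,
        |f' (A t)| ^ q ≤ m ^ (q * (s * t)) * M ^ (q * (1 - s * t)) := by
      intro t ht
      have hc := hconv a ⟨le_refl a, hab.le⟩ b ⟨hab.le, le_refl b⟩ t ht
      rw [← hArpow t] at hc
      have hc2 : |f' (A t)| ^ q ≤ (m ^ q) ^ t ^ s * (M ^ q) ^ (1 - t) ^ s := hc
      rw [← Real.rpow_mul (abs_nonneg _), ← Real.rpow_mul (abs_nonneg _)] at hc2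
      refine le_trans hc2 (mul_le_mul ?_ ?_ (Real.rpow_nonneg hM0.le _)
        (Real.rpow_nonneg hm0.le _))
      · exact Real.rpow_le_rpow_of_exponent_ge hm0 hfa
          (mul_le_mul_of_nonneg_left (aux1 t ht) hq0.le)
      · exact Real.rpow_le_rpow_of_exponent_le hfb
          (mul_le_mul_of_nonneg_left (aux2 t ht) hq0.le)
    -- the two comparison functions
    set θ₁ : ℝ := (b * M ^ s / (a * m ^ s)) ^ q with hθ₁def
    set θ₂ : ℝ := (a * m ^ s / (b * M ^ s)) ^ q with hθ₂def
    have hms : (0:ℝ) < m ^ s := Real.rpow_pos_of_pos hm0 s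
    have hMs : (0:ℝ) < M ^ s := Real.rpow_pos_of_pos hM0 s
    have hbMs : (0:ℝ) < b * M ^ s := mul_pos hb0 hMs
    have hams : (0:ℝ) < a * m ^ s := mul_pos ha0 hms
    have hθ₁pos : 0 < θ₁ := Real.rpow_pos_of_pos (div_pos hbMs hams) q
    have hθ₂pos : 0 < θ₂ := Real.rpow_pos_of_pos (div_pos hams hbMs) q
    have hlogθ₁ : Real.log θ₁
        = q * (Real.log b + s * Real.log M - (Real.log a + s * Real.log m)) := by
      rw [hθ₁def, Real.log_rpow (div_pos hbMs hams), Real.log_div hbMs.ne' hams.ne',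
        Real.log_mul hb0.ne' hMs.ne', Real.log_mul ha0.ne' hms.ne',
        Real.log_rpow hM0, Real.log_rpow hm0]
    have hlogθ₂ : Real.log θ₂
        = q * (Real.log a + s * Real.log m - (Real.log b + s * Real.log M)) := by
      rw [hθ₂def, Real.log_rpow (div_pos hams hbMs), Real.log_div hams.ne' hbMs.ne',
        Real.log_mul ha0.ne' hms.ne', Real.log_mul hb0.ne' hMs.ne',
        Real.log_rpow hm0, Real.log_rpow hM0]
    set K₁ : ℝ := a * m ^ s * M ^ (1 - s) with hK₁def
    set K₂ : ℝ := b * M with hK₂def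
    have hK₁pos : 0 < K₁ := mul_pos hams (Real.rpow_pos_of_pos hM0 _)
    have hK₂pos : 0 < K₂ := mul_pos hb0 hM0
    have hAlog : ∀ t, Real.log (A t) = Real.log b - t * L := by
      intro t; rw [hAdef]; exact Real.log_exp _
    have hid₂ : ∀ t, (A t) ^ q * (m ^ (q * (s * t)) * M ^ (q * (1 - s * t)))
        = (K₂ * θ₂ ^ (t / q)) ^ q := by
      intro t
      have l1 : (0:ℝ) < K₂ * θ₂ ^ (t / q) := mul_pos hK₂pos (Real.rpow_pos_of_pos hθ₂pos _)
      have lhspos : (0:ℝ) < (A t) ^ q * (m ^ (q * (s * t)) * M ^ (q * (1 - s * t))) :=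
        mul_pos (Real.rpow_pos_of_pos (hA0 t) _)
          (mul_pos (Real.rpow_pos_of_pos hm0 _) (Real.rpow_pos_of_pos hM0 _))
      have hlog : Real.log ((A t) ^ q * (m ^ (q * (s * t)) * M ^ (q * (1 - s * t))))
          = Real.log ((K₂ * θ₂ ^ (t / q)) ^ q) := by
        rw [Real.log_mul (Real.rpow_pos_of_pos (hA0 t) _).ne'
            (mul_pos (Real.rpow_pos_of_pos hm0 _) (Real.rpow_pos_of_pos hM0 _)).ne',
          Real.log_mul (Real.rpow_pos_of_pos hm0 _).ne' (Real.rpow_pos_of_pos hM0 _).ne',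
          Real.log_rpow (hA0 t), Real.log_rpow hm0, Real.log_rpow hM0,
          Real.log_rpow l1, Real.log_mul hK₂pos.ne' (Real.rpow_pos_of_pos hθ₂pos _).ne',
          Real.log_rpow hθ₂pos, hK₂def, Real.log_mul hb0.ne' hM0.ne',
          hlogθ₂, hAlog t, hLdef]
        field_simp
        ring
      rw [← Real.exp_log lhspos, ← Real.exp_log (Real.rpow_pos_of_pos l1 q), hlog]
    have hid₁ : ∀ t, (A t) ^ q * (m ^ (q * (s * t)) * M ^ (q * (1 - s * t)))
        = (K₁ * θ₁ ^ ((1 - t) / q)) ^ q := by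
      intro t
      have l1 : (0:ℝ) < K₁ * θ₁ ^ ((1 - t) / q) := mul_pos hK₁pos (Real.rpow_pos_of_pos hθ₁pos _)
      have lhspos : (0:ℝ) < (A t) ^ q * (m ^ (q * (s * t)) * M ^ (q * (1 - s * t))) :=
        mul_pos (Real.rpow_pos_of_pos (hA0 t) _)
          (mul_pos (Real.rpow_pos_of_pos hm0 _) (Real.rpow_pos_of_pos hM0 _))
      have hlog : Real.log ((A t) ^ q * (m ^ (q * (s * t)) * M ^ (q * (1 - s * t))))
          = Real.log ((K₁ * θ₁ ^ ((1 - t) / q)) ^ q) := by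
        rw [Real.log_mul (Real.rpow_pos_of_pos (hA0 t) _).ne'
            (mul_pos (Real.rpow_pos_of_pos hm0 _) (Real.rpow_pos_of_pos hM0 _)).ne',
          Real.log_mul (Real.rpow_pos_of_pos hm0 _).ne' (Real.rpow_pos_of_pos hM0 _).ne',
          Real.log_rpow (hA0 t), Real.log_rpow hm0, Real.log_rpow hM0,
          Real.log_rpow l1, Real.log_mul hK₁pos.ne' (Real.rpow_pos_of_pos hθ₁pos _).ne',
          Real.log_rpow hθ₁pos, hK₁def, Real.log_mul hams.ne' (Real.rpow_pos_of_pos hM0 _).ne',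
          Real.log_mul ha0.ne' hms.ne', Real.log_rpow hm0, Real.log_rpow hM0,
          hlogθ₁, hAlog t, hLdef]
        field_simp
        ring
      rw [← Real.exp_log lhspos, ← Real.exp_log (Real.rpow_pos_of_pos l1 q), hlog]
    -- pointwise bounds on X
    have hpow : ∀ {x y : ℝ}, 0 ≤ x → 0 ≤ y → x ^ q ≤ y ^ q → x ≤ y := by
      intro x y hx hy hxy
      by_contra hlt
      push_neg at hlt
      exact absurd (Real.rpow_lt_rpow hy hlt hq0) (not_lt.mpr hxy)
    have hXq : ∀ t, (X t) ^ q = (A t) ^ q * |f' (A t)| ^ q := fun t =>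
      Real.mul_rpow (hA0 t).le (abs_nonneg _)
    have hX₂pt : ∀ t ∈ Set.Icc (0:ℝ) 1, X t ≤ K₂ * θ₂ ^ (t / q) := by
      intro t ht
      refine hpow (mul_nonneg (hA0 t).le (abs_nonneg _))
        (mul_pos hK₂pos (Real.rpow_pos_of_pos hθ₂pos _)).le ?_
      rw [hXq t, ← hid₂ t]
      exact mul_le_mul_of_nonneg_left (hpt t ht) (Real.rpow_nonneg (hA0 t).le _)
    have hX₁pt : ∀ t ∈ Set.Icc (0:ℝ) 1, X t ≤ K₁ * θ₁ ^ ((1 - t) / q) := by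
      intro t ht
      refine hpow (mul_nonneg (hA0 t).le (abs_nonneg _))
        (mul_pos hK₁pos (Real.rpow_pos_of_pos hθ₁pos _)).le ?_
      rw [hXq t, ← hid₁ t]
      exact mul_le_mul_of_nonneg_left (hpt t ht) (Real.rpow_nonneg (hA0 t).le _)
    -- Hölder for the weight t
    have hqpow : ∀ (θ K : ℝ), 0 < θ → 0 < K → ∀ u : ℝ, (K * θ ^ (u / q)) ^ q
        = K ^ q * θ ^ u := by
      intro θ K hθ hK u
      rw [Real.mul_rpow hK.le (Real.rpow_nonneg hθ.le _),
        ← Real.rpow_mul hθ.le, div_mul_cancel₀ u hq0.ne']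
    have hwhalf₂ : ∫ t in (0:ℝ)..1, max t 0 = 1/2 := by
      rw [intervalIntegral.integral_congr (g := fun t : ℝ => t)
        (fun t ht => by
          rw [Set.uIcc_of_le zero_le_one] at ht
          exact max_eq_left ht.1)]
      simp [integral_id]
    have hwhalf₁ : ∫ t in (0:ℝ)..1, max (1 - t) 0 = 1/2 := by
      rw [intervalIntegral.integral_congr (g := fun t : ℝ => 1 - t)
        (fun t ht => by
          rw [Set.uIcc_of_le zero_le_one] at ht
          exact max_eq_left (by linarith [ht.2]))]
      rw [intervalIntegral.integral_sub intervalIntegrable_const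
        intervalIntegral.intervalIntegrable_id]
      simp [integral_id]
      norm_num
    have hT₂ : ∫ t in (0:ℝ)..1, t * X t ≤ (1/2:ℝ) ^ (1 - 1/q) * (K₂ * (g₁ θ₂) ^ (1/q)) := by
      have hhc : Continuous (fun t : ℝ => K₂ * θ₂ ^ (t / q)) :=
        continuous_const.mul ((const_rpow_cont' hθ₂pos).comp (continuous_id.div_const q))
      have hint1 : IntervalIntegrable (fun t => t * X t) volume 0 1 :=
        hXint.continuousOn_mul continuousOn_id
      have hint2 : IntervalIntegrable (fun t : ℝ => t * (K₂ * θ₂ ^ (t / q))) volume 0 1 :=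
        (continuous_id.mul hhc).intervalIntegrable 0 1
      have step1 : ∫ t in (0:ℝ)..1, t * X t ≤ ∫ t in (0:ℝ)..1, t * (K₂ * θ₂ ^ (t / q)) :=
        intervalIntegral.integral_mono_on zero_le_one hint1 hint2
          (fun t ht => mul_le_mul_of_nonneg_left (hX₂pt t ht) ht.1)
      have step2 : ∫ t in (0:ℝ)..1, t * (K₂ * θ₂ ^ (t / q))
          = ∫ t in (0:ℝ)..1, (max t 0) * (K₂ * θ₂ ^ (t / q)) := by
        apply intervalIntegral.integral_congr
        intro t ht
        rw [Set.uIcc_of_le zero_le_one] at ht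
        simp only [max_eq_left ht.1]
      have step3 := holder_aux' hq (continuous_id.max continuous_const) hhc
        (fun t => le_max_right _ _)
        (fun t => (mul_pos hK₂pos (Real.rpow_pos_of_pos hθ₂pos _)).le) hwhalf₂
      have step4 : ∫ t in (0:ℝ)..1, (max t 0) * (K₂ * θ₂ ^ (t / q)) ^ q
          = K₂ ^ q * g₁ θ₂ := by
        rw [intervalIntegral.integral_congr (g := fun t => K₂ ^ q * (t * θ₂ ^ t))
          (fun t ht => by
            rw [Set.uIcc_of_le zero_le_one] at ht
            simp only [max_eq_left ht.1, hqpow θ₂ K₂ hθ₂pos hK₂pos t]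
            ring), intervalIntegral.integral_const_mul, g1_int' hθ₂pos]
      have step5 : (K₂ ^ q * g₁ θ₂) ^ (1/q) = K₂ * (g₁ θ₂) ^ (1/q) := by
        rw [Real.mul_rpow (Real.rpow_nonneg hK₂pos.le _) (g1_nonneg' hθ₂pos.le),
          ← Real.rpow_mul hK₂pos.le, mul_one_div_cancel hq0.ne', Real.rpow_one]
      calc ∫ t in (0:ℝ)..1, t * X t
          ≤ ∫ t in (0:ℝ)..1, t * (K₂ * θ₂ ^ (t/q)) := step1
        _ = ∫ t in (0:ℝ)..1, (max t 0) * (K₂ * θ₂ ^ (t/q)) := step2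
        _ ≤ (1/2:ℝ)^(1-1/q) * (∫ t in (0:ℝ)..1, (max t 0) * (K₂ * θ₂ ^ (t/q)) ^ q)^(1/q) :=
            step3
        _ = (1/2:ℝ)^(1-1/q) * (K₂ ^ q * g₁ θ₂) ^ (1/q) := by rw [step4]
        _ = _ := by rw [step5]
    have hT₁ : ∫ t in (0:ℝ)..1, (1 - t) * X t
        ≤ (1/2:ℝ) ^ (1 - 1/q) * (K₁ * (g₁ θ₁) ^ (1/q)) := by
      have hhc : Continuous (fun t : ℝ => K₁ * θ₁ ^ ((1 - t) / q)) :=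
        continuous_const.mul ((const_rpow_cont' hθ₁pos).comp
          ((continuous_const.sub continuous_id).div_const q))
      have hint1 : IntervalIntegrable (fun t => (1 - t) * X t) volume 0 1 :=
        hXint.continuousOn_mul (continuous_const.sub continuous_id).continuousOn
      have hint2 : IntervalIntegrable (fun t : ℝ => (1 - t) * (K₁ * θ₁ ^ ((1 - t) / q)))
          volume 0 1 := ((continuous_const.sub continuous_id).mul hhc).intervalIntegrable 0 1
      have step1 : ∫ t in (0:ℝ)..1, (1 - t) * X t
          ≤ ∫ t in (0:ℝ)..1, (1 - t) * (K₁ * θ₁ ^ ((1 - t) / q)) :=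
        intervalIntegral.integral_mono_on zero_le_one hint1 hint2
          (fun t ht => mul_le_mul_of_nonneg_left (hX₁pt t ht) (by linarith [ht.2]))
      have step2 : ∫ t in (0:ℝ)..1, (1 - t) * (K₁ * θ₁ ^ ((1 - t) / q))
          = ∫ t in (0:ℝ)..1, (max (1 - t) 0) * (K₁ * θ₁ ^ ((1 - t) / q)) := by
        apply intervalIntegral.integral_congr
        intro t ht
        rw [Set.uIcc_of_le zero_le_one] at ht
        simp only [max_eq_left (by linarith [ht.2] : (0:ℝ) ≤ 1 - t)]
      have step3 := holder_aux' hq ((continuous_const.sub continuous_id).max continuous_const)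
        hhc (fun t => le_max_right _ _)
        (fun t => (mul_pos hK₁pos (Real.rpow_pos_of_pos hθ₁pos _)).le) hwhalf₁
      have step4 : ∫ t in (0:ℝ)..1, (max (1 - t) 0) * (K₁ * θ₁ ^ ((1 - t) / q)) ^ q
          = K₁ ^ q * g₁ θ₁ := by
        rw [intervalIntegral.integral_congr (g := fun t => K₁ ^ q * ((1 - t) * θ₁ ^ (1 - t)))
          (fun t ht => by
            rw [Set.uIcc_of_le zero_le_one] at ht
            simp only [max_eq_left (by linarith [ht.2] : (0:ℝ) ≤ 1 - t),
              hqpow θ₁ K₁ hθ₁pos hK₁pos (1 - t)]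
            ring), intervalIntegral.integral_const_mul, g1_int'' hθ₁pos]
      have step5 : (K₁ ^ q * g₁ θ₁) ^ (1/q) = K₁ * (g₁ θ₁) ^ (1/q) := by
        rw [Real.mul_rpow (Real.rpow_nonneg hK₁pos.le _) (g1_nonneg' hθ₁pos.le),
          ← Real.rpow_mul hK₁pos.le, mul_one_div_cancel hq0.ne', Real.rpow_one]
      calc ∫ t in (0:ℝ)..1, (1 - t) * X t
          ≤ ∫ t in (0:ℝ)..1, (1 - t) * (K₁ * θ₁ ^ ((1 - t)/q)) := step1
        _ = ∫ t in (0:ℝ)..1, (max (1 - t) 0) * (K₁ * θ₁ ^ ((1 - t)/q)) := step2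
        _ ≤ (1/2:ℝ)^(1-1/q) *
            (∫ t in (0:ℝ)..1, (max (1 - t) 0) * (K₁ * θ₁ ^ ((1 - t)/q)) ^ q)^(1/q) := step3
        _ = (1/2:ℝ)^(1-1/q) * (K₁ ^ q * g₁ θ₁) ^ (1/q) := by rw [step4]
        _ = _ := by rw [step5]
    -- assembling
    have hXnonneg : ∀ t, 0 ≤ X t := fun t => mul_nonneg (hA0 t).le (abs_nonneg _)
    have hintA : IntervalIntegrable (fun t => (1 - t) * X t) volume 0 1 :=
      hXint.continuousOn_mul (continuous_const.sub continuous_id).continuousOn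
    have hintB : IntervalIntegrable (fun t => t * X t) volume 0 1 :=
      hXint.continuousOn_mul continuousOn_id
    have hT : |∫ t in (0:ℝ)..1, (1 - 2*t) * F' t|
        ≤ L * ((∫ t in (0:ℝ)..1, (1 - t) * X t) + ∫ t in (0:ℝ)..1, t * X t) := by
      have habs : ∀ t ∈ Set.Icc (0:ℝ) 1, |(1 - 2*t) * F' t| ≤ L * X t := by
        intro t ht
        have h1 : |F' t| = L * X t := by
          simp only [hF'def, hXdef]
          rw [abs_mul, neg_mul, abs_neg, abs_mul, abs_of_pos hL, abs_of_pos (hA0 t)]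
          ring
        rw [abs_mul, h1]
        have h2 : |1 - 2*t| ≤ 1 := abs_le.mpr ⟨by linarith [ht.2], by linarith [ht.1]⟩
        calc |1 - 2*t| * (L * X t) ≤ 1 * (L * X t) :=
              mul_le_mul_of_nonneg_right h2 (mul_nonneg hL.le (hXnonneg t))
          _ = L * X t := one_mul _
      have hi1 : IntervalIntegrable (fun t => |(1 - 2*t) * F' t|) volume 0 1 :=
        (hF'int.continuousOn_mul (Continuous.continuousOn
          (continuous_const.sub (continuous_const.mul continuous_id)))).abs
      have hi2 : IntervalIntegrable (fun t => L * X t) volume 0 1 := hXint.const_mul L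
      have hsplit : ∫ t in (0:ℝ)..1, X t
          = (∫ t in (0:ℝ)..1, (1 - t) * X t) + ∫ t in (0:ℝ)..1, t * X t := by
        rw [← intervalIntegral.integral_add hintA hintB]
        apply intervalIntegral.integral_congr
        intro t _
        simp only
        ring
      calc |∫ t in (0:ℝ)..1, (1 - 2*t) * F' t|
          ≤ ∫ t in (0:ℝ)..1, |(1 - 2*t) * F' t| :=
            intervalIntegral.abs_integral_le_integral_abs zero_le_one
        _ ≤ ∫ t in (0:ℝ)..1, L * X t :=
            intervalIntegral.integral_mono_on zero_le_one hi1 hi2 habs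
        _ = L * ∫ t in (0:ℝ)..1, X t := intervalIntegral.integral_const_mul L X
        _ = L * ((∫ t in (0:ℝ)..1, (1 - t) * X t) + ∫ t in (0:ℝ)..1, t * X t) := by
            rw [hsplit]
    rw [Real.log_div hb0.ne' ha0.ne', ← hLdef, hD,
      show (2:ℝ) - 1/q = 1 + (1 - 1/q) by ring,
      Real.rpow_add (by norm_num : (0:ℝ) < (1:ℝ)/2), Real.rpow_one, abs_mul,
      show |(-(1/2):ℝ)| = 1/2 by norm_num]
    have hG₁ : 0 ≤ (g₁ θ₁) ^ (1/q) := Real.rpow_nonneg (g1_nonneg' hθ₁pos.le) _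
    have hG₂ : 0 ≤ (g₁ θ₂) ^ (1/q) := Real.rpow_nonneg (g1_nonneg' hθ₂pos.le) _
    calc (1/2 : ℝ) * |∫ t in (0:ℝ)..1, (1 - 2*t) * F' t|
        ≤ (1/2 : ℝ) * (L * ((∫ t in (0:ℝ)..1, (1 - t) * X t) + ∫ t in (0:ℝ)..1, t * X t)) :=
          mul_le_mul_of_nonneg_left hT (by norm_num)
      _ ≤ (1/2 : ℝ) * (L * ((1/2:ℝ)^(1-1/q) * (K₁ * (g₁ θ₁)^(1/q))
            + (1/2:ℝ)^(1-1/q) * (K₂ * (g₁ θ₂)^(1/q)))) := by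
          apply mul_le_mul_of_nonneg_left _ (by norm_num : (0:ℝ) ≤ 1/2)
          exact mul_le_mul_of_nonneg_left (add_le_add hT₁ hT₂) hL.le
      _ = L * (1/2 * (1/2:ℝ)^(1-1/q)) * (K₁ * (g₁ θ₁)^(1/q) + K₂ * (g₁ θ₂)^(1/q)) := by
          ring
end

section
/- Let f : I ⊆ (0,∞) → (0,∞) be differentiable on I°, let a, b ∈ I° with a < b, f' integrable on [a,b], and suppose |f'|^q is s-geometrically convex on [a,b] for some q ≥ 1 and s ∈ (0,1]. If |f'(a)| ≤ 1 and |f'(b)| ≤ 1, then |f(√(ab)) − (1/(ln b − ln a)) ∫_a^b f(x)/x dx| ≤ ln(b/a) · (1/2)^{3−1/q} · [ a|f'(a)|^s g₁(θ₃)^{1/q} + b|f'(b)|^s g₁(θ₄)^{1/q} ]. -/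
open Real MeasureTheory Set

lemma g₁_nonneg (u : ℝ) (hu : 0 ≤ u) : 0 ≤ g₁ u := by
  unfold g₁
  split
  · norm_num
  · apply div_nonneg _ (sq_nonneg _)
    rcases eq_or_lt_of_le hu with h | h
    · simp [← h]
    · have h1 : Real.log (1/u) ≤ 1/u - 1 := Real.log_le_sub_one_of_pos (by positivity)
      rw [Real.log_div one_ne_zero (ne_of_gt h), Real.log_one] at h1
      have := mul_le_mul_of_nonneg_left h1 (le_of_lt h)
      have h2 : u * (1/u - 1) = 1 - u := by field_simp
      nlinarith

open intervalIntegral in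
lemma int_g1 (v : ℝ) (hv : 0 ≤ v) :
    ∫ t in (0:ℝ)..(1/2), t * v ^ (2*t) = (1/4) * g₁ v := by
  rcases eq_or_lt_of_le hv with h0 | h0
  · -- v = 0
    have hz : EqOn (fun t : ℝ => t * v ^ (2*t)) (fun _ => (0:ℝ)) (Ioc 0 (1/2)) := by
      intro t ht
      have : (2:ℝ)*t ≠ 0 := by nlinarith [ht.1]
      simp [← h0, Real.zero_rpow this]
    rw [intervalIntegral.integral_of_le (by norm_num),
      MeasureTheory.setIntegral_congr_fun measurableSet_Ioc hz]
    simp [g₁, ← h0, Real.log_zero]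
  rcases eq_or_ne v 1 with h1 | h1
  · simp only [h1, Real.one_rpow, mul_one, g₁, if_pos rfl]
    rw [integral_id]; norm_num
  · have hc : Real.log v ≠ 0 := Real.log_ne_zero_of_pos_of_ne_one h0 h1
    set c : ℝ := Real.log v with hcdef
    have hder : ∀ t ∈ uIcc (0:ℝ) (1/2),
        HasDerivAt (fun t : ℝ => (t/(2*c) - 1/(4*c^2)) * Real.exp (2*c*t))
          (t * Real.exp (2*c*t)) t := by
      intro t _
      have h1 : HasDerivAt (fun t : ℝ => t/(2*c) - 1/(4*c^2)) (1/(2*c)) t :=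
        ((hasDerivAt_id t).div_const (2*c)).sub_const _
      have h2 : HasDerivAt (fun t : ℝ => Real.exp (2*c*t)) (Real.exp (2*c*t) * (2*c)) t := by
        simpa using ((hasDerivAt_id t).const_mul (2*c)).exp
      have := h1.mul h2
      refine this.congr_deriv ?_
      field_simp
      ring
    have hcont : IntervalIntegrable (fun t : ℝ => t * Real.exp (2*c*t)) volume 0 (1/2) :=
      (continuous_id.mul (Real.continuous_exp.comp (continuous_const.mul continuous_id))).intervalIntegrable _ _
    have heq : (fun t : ℝ => t * v ^ (2*t)) = fun t : ℝ => t * Real.exp (2*c*t) := by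
      funext t
      rw [Real.rpow_def_of_pos h0]
      ring_nf
      rw [← hcdef]
    rw [heq, intervalIntegral.integral_eq_sub_of_hasDerivAt hder hcont]
    have hv' : Real.exp c = v := Real.exp_log h0
    simp only [g₁, if_neg h1, ← hcdef]
    have : (2:ℝ)*c*(1/2) = c := by ring
    rw [this]
    rw [← hv']
    field_simp
    simp only [mul_zero, zero_mul, Real.exp_zero]
    ring

lemma expo_trick (μ : ℝ) (hμ0 : 0 ≤ μ) (hμ1 : μ ≤ 1) (q s w : ℝ)
    (hq : 0 < q) (hs0 : 0 < s) (hs1 : s ≤ 1) (hw0 : 0 < w) (hw1 : w ≤ 1) :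
    (μ ^ q) ^ (w ^ s) ≤ (μ ^ s) ^ (q * w) := by
  rw [← Real.rpow_mul hμ0, ← Real.rpow_mul hμ0]
  rcases eq_or_lt_of_le hμ0 with h0 | h0
  · rw [← h0]
    rw [Real.zero_rpow (by positivity), Real.zero_rpow (by positivity)]
  · apply Real.rpow_le_rpow_of_exponent_ge h0 hμ1
    have hws : w ≤ w ^ s := by
      calc w = w ^ (1:ℝ) := (Real.rpow_one w).symm
      _ ≤ w ^ s := Real.rpow_le_rpow_of_exponent_ge hw0 hw1 hs1
    have h1 : s*w ≤ w := by nlinarith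
    nlinarith [mul_le_mul_of_nonneg_left (h1.trans hws) hq.le]

lemma rpow_le_max (α q e : ℝ) (hα : 0 ≤ α) (he : 0 ≤ e) (heq : e ≤ q) :
    α ^ e ≤ max 1 (α ^ q) := by
  rcases le_total α 1 with h | h
  · exact le_max_of_le_left (Real.rpow_le_one hα h he)
  · exact le_max_of_le_right (Real.rpow_le_rpow_of_exponent_le h heq)

lemma bound_le (q α β : ℝ) (hq : 0 < q) (hα : 0 ≤ α) (hβ : 0 ≤ β)
    (t : ℝ) (ht : t ∈ Icc (0:ℝ) 1) :
    α ^ (q*(1-t)) * β ^ (q*t) ≤ max 1 (α ^ q) * max 1 (β ^ q) := by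
  have h1 : α ^ (q*(1-t)) ≤ max 1 (α ^ q) :=
    rpow_le_max α q _ hα (by nlinarith [ht.2]) (by nlinarith [ht.1])
  have h2 : β ^ (q*t) ≤ max 1 (β ^ q) :=
    rpow_le_max β q _ hβ (by nlinarith [ht.1]) (by nlinarith [ht.2])
  exact mul_le_mul h1 h2 (Real.rpow_nonneg hβ _) (le_trans (by norm_num) (le_max_left _ _))

open intervalIntegral in
lemma key (q : ℝ) (hq : 1 ≤ q) (α β : ℝ) (hα : 0 ≤ α) (hβ : 0 ≤ β)
    (G : ℝ → ℝ) (hGm : Measurable G) (hG0 : ∀ t, 0 ≤ G t)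
    (hbound : ∀ t ∈ Set.Ioc (0:ℝ) (1/2:ℝ), G t ^ q ≤ α ^ (q*(1-t)) * β ^ (q*t)) :
    ∫ t in (0:ℝ)..(1/2), t * G t ≤
      (1/2:ℝ) ^ ((3:ℝ) - 1/q) * (α * (g₁ ((β/α) ^ (q/2))) ^ (1/q)) := by
  have hq0 : (0:ℝ) < q := lt_of_lt_of_le one_pos hq
  set C : ℝ := max 1 (α ^ q) * max 1 (β ^ q) with hCdef
  have hC1 : (1:ℝ) ≤ C := by
    have h1 := le_max_left (1:ℝ) (α ^ q); have h2 := le_max_left (1:ℝ) (β ^ q)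
    nlinarith
  have hC0 : (0:ℝ) ≤ C := by linarith
  set g : ℝ → ℝ := fun t => α ^ (q*(1-t)) * β ^ (q*t) with hgdef
  have hg0 : ∀ t, 0 ≤ g t := fun t => mul_nonneg (Real.rpow_nonneg hα _) (Real.rpow_nonneg hβ _)
  have hgC : ∀ t ∈ Set.Icc (0:ℝ) 1, g t ≤ C := fun t ht => bound_le q α β hq0 hα hβ t ht
  have hIoc : Set.Ioc (0:ℝ) (1/2) ⊆ Set.Icc (0:ℝ) 1 := fun t ht => ⟨ht.1.le, by linarith [ht.2]⟩
  have hgm : Measurable g :=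
    (measurable_const.pow ((measurable_const.sub measurable_id).const_mul q)).mul
      (measurable_const.pow (measurable_id.const_mul q))
  have hmeas_tg : Measurable (fun t : ℝ => t * g t) := measurable_id.mul hgm
  have hmeas_tGq : Measurable (fun t : ℝ => t * G t ^ q) :=
    measurable_id.mul (hGm.pow measurable_const)
  have hint_tg : IntegrableOn (fun t : ℝ => t * g t) (Set.Ioc 0 (1/2)) := by
    apply Integrable.mono' (integrable_const C) hmeas_tg.aestronglyMeasurable.restrict
    filter_upwards [ae_restrict_mem measurableSet_Ioc] with t ht
    rw [Real.norm_of_nonneg (mul_nonneg ht.1.le (hg0 t))]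
    calc t * g t ≤ 1 * C :=
          mul_le_mul (by linarith [ht.2]) (hgC t (hIoc ht)) (hg0 t) one_pos.le
    _ = C := one_mul C
  have hint_tGq : IntegrableOn (fun t : ℝ => t * G t ^ q) (Set.Ioc 0 (1/2)) := by
    apply Integrable.mono' (integrable_const C) hmeas_tGq.aestronglyMeasurable.restrict
    filter_upwards [ae_restrict_mem measurableSet_Ioc] with t ht
    rw [Real.norm_of_nonneg (mul_nonneg ht.1.le (Real.rpow_nonneg (hG0 t) _))]
    calc t * G t ^ q ≤ 1 * C :=
          mul_le_mul (by linarith [ht.2]) ((hbound t ht).trans (hgC t (hIoc ht)))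
            (Real.rpow_nonneg (hG0 t) _) one_pos.le
    _ = C := one_mul C
  have hJle : (∫ t in (0:ℝ)..(1/2), t * G t ^ q) ≤ ∫ t in (0:ℝ)..(1/2), t * g t := by
    rw [intervalIntegral.integral_of_le (by norm_num),
        intervalIntegral.integral_of_le (by norm_num)]
    apply MeasureTheory.setIntegral_mono_on hint_tGq hint_tg measurableSet_Ioc
    intro t ht
    exact mul_le_mul_of_nonneg_left (hbound t ht) ht.1.le
  have hJg : (∫ t in (0:ℝ)..(1/2), t * g t) = α ^ q * ((1/4) * g₁ ((β/α) ^ (q/2))) := by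
    rcases eq_or_lt_of_le hα with hα0 | hα0
    · have hz : Set.EqOn (fun t : ℝ => t * g t) (fun _ => (0:ℝ)) (Set.Ioc 0 (1/2)) := by
        intro t ht
        have hqt : q*(1-t) ≠ 0 := by nlinarith [ht.2]
        simp [hgdef, ← hα0, Real.zero_rpow hqt]
      rw [intervalIntegral.integral_of_le (by norm_num),
        MeasureTheory.setIntegral_congr_fun measurableSet_Ioc hz]
      simp [← hα0, Real.zero_rpow hq0.ne']
    rcases eq_or_lt_of_le hβ with hβ0 | hβ0
    · have hz : Set.EqOn (fun t : ℝ => t * g t) (fun _ => (0:ℝ)) (Set.Ioc 0 (1/2)) := by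
        intro t ht
        have hqt : q*t ≠ 0 := by nlinarith [ht.1]
        simp [hgdef, ← hβ0, Real.zero_rpow hqt]
      rw [intervalIntegral.integral_of_le (by norm_num),
        MeasureTheory.setIntegral_congr_fun measurableSet_Ioc hz]
      have harg : (β/α) ^ (q/2) = (0:ℝ) := by
        rw [← hβ0, zero_div, Real.zero_rpow (by positivity)]
      rw [harg]
      simp [g₁, Real.log_zero]
    · set v : ℝ := (β/α) ^ (q/2) with hvdef
      have hv0 : 0 ≤ v := Real.rpow_nonneg (by positivity) _
      have hgv : ∀ t : ℝ, g t = α ^ q * v ^ (2*t) := by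
        intro t
        have h1 : v ^ (2*t) = β ^ (q*t) / α ^ (q*t) := by
          rw [hvdef, ← Real.rpow_mul (by positivity), show q/2*(2*t) = q*t by ring,
            Real.div_rpow hβ hα0.le]
        have h2 : α ^ (q*(1-t)) = α ^ q / α ^ (q*t) := by
          rw [← Real.rpow_sub hα0]; ring_nf
        show α ^ (q*(1-t)) * β ^ (q*t) = α ^ q * v ^ (2*t)
        rw [h1, h2]
        field_simp
      calc (∫ t in (0:ℝ)..(1/2), t * g t)
          = ∫ t in (0:ℝ)..(1/2), α ^ q * (t * v ^ (2*t)) :=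
            intervalIntegral.integral_congr (fun t _ => by rw [hgv t]; ring)
        _ = α ^ q * ∫ t in (0:ℝ)..(1/2), t * v ^ (2*t) :=
            intervalIntegral.integral_const_mul _ _
        _ = α ^ q * ((1/4) * g₁ v) := by rw [int_g1 v hv0]
  -- Hölder step
  have hHolder : (∫ t in (0:ℝ)..(1/2), t * G t) ≤
      (1/8 : ℝ) ^ (1 - 1/q) * (∫ t in (0:ℝ)..(1/2), t * G t ^ q) ^ (1/q) := by
    rcases eq_or_lt_of_le hq with hq1 | hq1
    · rw [← hq1]
      simp [Real.rpow_one]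
    · set p : ℝ := q/(q-1) with hpdef
      have hq1' : (0:ℝ) < q - 1 := by linarith
      have hp1 : 1 < p := (one_lt_div hq1').2 (by linarith)
      have hp0 : (0:ℝ) < p := by linarith
      have hpq_sum : 1/p + 1/q = 1 := by
        rw [hpdef, one_div_div, ← add_div, sub_add_cancel, div_self hq0.ne']
      have hpq : Real.HolderConjugate p q := Real.holderConjugate_iff.2 ⟨hp1, by simpa [one_div] using hpq_sum⟩
      set μ : Measure ℝ := volume.restrict (Set.Ioc 0 (1/2)) with hμdef
      haveI : IsFiniteMeasure μ := ⟨by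
        rw [hμdef, Measure.restrict_apply_univ]
        simp [Real.volume_Ioc]⟩
      have hae : ∀ᵐ t ∂μ, t ∈ Set.Ioc (0:ℝ) (1/2) := ae_restrict_mem measurableSet_Ioc
      have hGle : ∀ t ∈ Set.Ioc (0:ℝ) (1/2), G t ≤ C ^ (1/q) := by
        intro t ht
        have h1 : G t ^ q ≤ C := (hbound t ht).trans (hgC t (hIoc ht))
        have h2 := Real.rpow_le_rpow (Real.rpow_nonneg (hG0 t) q) h1 (by positivity : (0:ℝ) ≤ 1/q)
        rw [one_div, Real.rpow_rpow_inv (hG0 t) hq0.ne'] at h2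
        rwa [one_div]
      have hmemf : MemLp (fun t : ℝ => t ^ (1/p)) (ENNReal.ofReal p) μ := by
        apply MemLp.of_bound (measurable_id.pow measurable_const).aestronglyMeasurable 1
        filter_upwards [hae] with t ht
        simp only [id_eq]
        rw [Real.norm_of_nonneg (Real.rpow_nonneg ht.1.le _)]
        exact Real.rpow_le_one ht.1.le (by linarith [ht.2]) (by positivity)
      have hmemg : MemLp (fun t : ℝ => t ^ (1/q) * G t) (ENNReal.ofReal q) μ := by
        apply MemLp.of_bound ((measurable_id.pow measurable_const).mul hGm).aestronglyMeasurable
          (C ^ (1/q))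
        filter_upwards [hae] with t ht
        simp only [id_eq, Pi.mul_apply]
        rw [Real.norm_of_nonneg (mul_nonneg (Real.rpow_nonneg ht.1.le _) (hG0 t))]
        calc t ^ (1/q) * G t ≤ 1 * (C ^ (1/q)) :=
            mul_le_mul (Real.rpow_le_one ht.1.le (by linarith [ht.2]) (by positivity))
              (hGle t ht) (hG0 t) one_pos.le
          _ = C ^ (1/q) := one_mul _
      have hf_nn : 0 ≤ᵐ[μ] (fun t : ℝ => t ^ (1/p)) := by
        filter_upwards [hae] with t ht; exact Real.rpow_nonneg ht.1.le _
      have hg_nn : 0 ≤ᵐ[μ] (fun t : ℝ => t ^ (1/q) * G t) := by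
        filter_upwards [hae] with t ht
        exact mul_nonneg (Real.rpow_nonneg ht.1.le _) (hG0 t)
      have main := MeasureTheory.integral_mul_le_Lp_mul_Lq_of_nonneg hpq hf_nn hg_nn hmemf hmemg
      have e1 : (∫ t, t ^ (1/p) * (t ^ (1/q) * G t) ∂μ) = ∫ t, t * G t ∂μ := by
        apply MeasureTheory.integral_congr_ae
        filter_upwards [hae] with t ht
        rw [← mul_assoc, ← Real.rpow_add ht.1, hpq_sum, Real.rpow_one]
      have e2 : (∫ t, (t ^ (1/p)) ^ p ∂μ) = 1/8 := by
        have : (∫ t, (t ^ (1/p)) ^ p ∂μ) = ∫ t, t ∂μ := by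
          apply MeasureTheory.integral_congr_ae
          filter_upwards [hae] with t ht
          rw [← Real.rpow_mul ht.1.le, one_div, inv_mul_cancel₀ (ne_of_gt hp0), Real.rpow_one]
        rw [this, hμdef, ← intervalIntegral.integral_of_le (by norm_num : (0:ℝ) ≤ 1/2)]
        rw [integral_id]; norm_num
      have e3 : (∫ t, (t ^ (1/q) * G t) ^ q ∂μ) = ∫ t, t * G t ^ q ∂μ := by
        apply MeasureTheory.integral_congr_ae
        filter_upwards [hae] with t ht
        rw [Real.mul_rpow (Real.rpow_nonneg ht.1.le _) (hG0 t),
          ← Real.rpow_mul ht.1.le, one_div, inv_mul_cancel₀ hq0.ne', Real.rpow_one]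
      rw [e1, e2, e3] at main
      rw [intervalIntegral.integral_of_le (by norm_num : (0:ℝ) ≤ 1/2),
        intervalIntegral.integral_of_le (by norm_num : (0:ℝ) ≤ 1/2)]
      have hpinv : 1/p = 1 - 1/q := by linarith
      rw [← hμdef, ← hpinv]
      exact main
  -- final assembly
  have hJ0 : 0 ≤ ∫ t in (0:ℝ)..(1/2), t * G t ^ q :=
    intervalIntegral.integral_nonneg (by norm_num)
      (fun t ht => mul_nonneg ht.1 (Real.rpow_nonneg (hG0 t) _))
  have hΓ0 : 0 ≤ g₁ ((β/α) ^ (q/2)) := g₁_nonneg _ (Real.rpow_nonneg (by positivity) _)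
  have step2 : (∫ t in (0:ℝ)..(1/2), t * G t ^ q) ^ (1/q) ≤
      (α ^ q * ((1/4) * g₁ ((β/α) ^ (q/2)))) ^ (1/q) :=
    Real.rpow_le_rpow hJ0 (hJle.trans_eq hJg) (by positivity)
  have heq : (1/8 : ℝ) ^ (1 - 1/q) * (α ^ q * ((1/4) * g₁ ((β/α) ^ (q/2)))) ^ (1/q) =
      (1/2:ℝ) ^ ((3:ℝ) - 1/q) * (α * (g₁ ((β/α) ^ (q/2))) ^ (1/q)) := by
    rw [Real.mul_rpow (Real.rpow_nonneg hα _) (by positivity),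
      Real.mul_rpow (by norm_num) hΓ0,
      one_div q, Real.rpow_rpow_inv hα hq0.ne']
    have h8 : (1/8 : ℝ) = (1/2 : ℝ) ^ (3:ℝ) := by
      rw [show (3:ℝ) = ((3:ℕ):ℝ) by norm_num, Real.rpow_natCast]; norm_num
    have h4 : (1/4 : ℝ) = (1/2 : ℝ) ^ (2:ℝ) := by
      rw [show (2:ℝ) = ((2:ℕ):ℝ) by norm_num, Real.rpow_natCast]; norm_num
    rw [h8, h4, ← Real.rpow_mul (by norm_num : (0:ℝ) ≤ 1/2),
      ← Real.rpow_mul (by norm_num : (0:ℝ) ≤ 1/2)]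
    have hsplit : ((1:ℝ)/2) ^ ((3:ℝ) * (1 - q⁻¹)) * ((1:ℝ)/2) ^ ((2:ℝ) * q⁻¹)
        = ((1:ℝ)/2) ^ ((3:ℝ) - q⁻¹) := by
      rw [← Real.rpow_add (by norm_num : (0:ℝ) < 1/2)]; congr 1; ring
    rw [← hsplit]; ring
  calc (∫ t in (0:ℝ)..(1/2), t * G t)
      ≤ (1/8 : ℝ) ^ (1 - 1/q) * (∫ t in (0:ℝ)..(1/2), t * G t ^ q) ^ (1/q) := hHolder
    _ ≤ (1/8 : ℝ) ^ (1 - 1/q) * (α ^ q * ((1/4) * g₁ ((β/α) ^ (q/2)))) ^ (1/q) :=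
        mul_le_mul_of_nonneg_left step2 (Real.rpow_nonneg (by norm_num) _)
    _ = _ := heq

open intervalIntegral in
theorem stmt_6
    (I : Set ℝ) (hI : I.OrdConnected) (hIpos : I ⊆ Set.Ioi (0:ℝ))
    (f f' : ℝ → ℝ) (hfpos : ∀ x ∈ I, 0 < f x)
    (a b : ℝ) (ha : a ∈ interior I) (hb : b ∈ interior I) (hab : a < b)
    (hdiff : ∀ x ∈ interior I, HasDerivAt f (f' x) x)
    (hint : IntervalIntegrable f' volume a b)
    (q s : ℝ) (hq : 1 ≤ q) (hs : s ∈ Set.Ioc (0:ℝ) 1)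
    (hconv : SGeometricallyConvexOn s (Set.Icc a b) (fun x => |f' x| ^ q))
    (hfa : |f' a| ≤ 1) (hfb : |f' b| ≤ 1) :
    |f (Real.sqrt (a * b)) - (1 / (Real.log b - Real.log a)) * ∫ x in a..b, f x / x| ≤
      Real.log (b / a) * (1 / 2 : ℝ) ^ (3 - 1 / q) *
        (a * |f' a| ^ s * (g₁ ((b * |f' b| ^ s / (a * |f' a| ^ s)) ^ (q / 2))) ^ (1 / q)
         + b * |f' b| ^ s * (g₁ ((a * |f' a| ^ s / (b * |f' b| ^ s)) ^ (q / 2))) ^ (1 / q)) := by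
  have hq0 : (0:ℝ) < q := lt_of_lt_of_le one_pos hq
  have ha0 : (0:ℝ) < a := hIpos (interior_subset ha)
  have hb0 : (0:ℝ) < b := hIpos (interior_subset hb)
  set l : ℝ := Real.log b - Real.log a with hldef
  have hl : 0 < l := sub_pos.2 (Real.log_lt_log ha0 hab)
  have hlog : Real.log (b/a) = l := by rw [Real.log_div (ne_of_gt hb0) (ne_of_gt ha0)]
  -- [a,b] ⊆ interior I
  have hsub : Set.Icc a b ⊆ interior I := by
    intro x hx
    rcases eq_or_lt_of_le hx.1 with h1 | h1
    · rwa [← h1]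
    rcases eq_or_lt_of_le hx.2 with h2 | h2
    · rwa [h2]
    have hIoo : Set.Ioo a b ⊆ I :=
      fun y hy => hI.out (interior_subset ha) (interior_subset hb) ⟨hy.1.le, hy.2.le⟩
    exact interior_maximal hIoo isOpen_Ioo ⟨h1, h2⟩
  set D : ℝ → ℝ := deriv f with hDdef
  have hD : ∀ x ∈ Set.Icc a b, HasDerivAt f (D x) x := by
    intro x hx
    have h := hdiff x (hsub hx)
    rwa [hDdef, h.deriv]
  have hDf' : ∀ x ∈ Set.Icc a b, D x = f' x := fun x hx => (hdiff x (hsub hx)).deriv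
  -- the exponential parametrization
  set φ : ℝ → ℝ := fun t => a * Real.exp (l * t) with hφdef
  have hφpos : ∀ t, 0 < φ t := fun t => mul_pos ha0 (Real.exp_pos _)
  have hφcont : Continuous φ := continuous_const.mul (Real.continuous_exp.comp
    (continuous_const.mul continuous_id))
  have hφ0 : φ 0 = a := by simp [hφdef]
  have hφ1 : φ 1 = b := by
    simp only [hφdef, mul_one, hldef]
    rw [Real.exp_sub, Real.exp_log hb0, Real.exp_log ha0]
    field_simp
  have hφhalf : φ (1/2) = Real.sqrt (a * b) := by
    show a * Real.exp (l * (1/2)) = Real.sqrt (a*b)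
    have h2 : a * b = (a * Real.exp (l*(1/2)))^2 := by
      have he : Real.exp (l*(1/2)) ^ 2 = Real.exp l := by
        rw [sq, ← Real.exp_add]; congr 1; ring
      have hel : Real.exp l = b / a := by
        rw [hldef, Real.exp_sub, Real.exp_log hb0, Real.exp_log ha0]
      rw [mul_pow, he, hel]
      field_simp
    rw [h2, Real.sqrt_sq (by positivity)]
  have hφmono : MonotoneOn φ (Set.Icc (0:ℝ) 1) := by
    intro u hu v hv huv
    have := Real.exp_le_exp.2 (mul_le_mul_of_nonneg_left huv hl.le)
    exact mul_le_mul_of_nonneg_left this ha0.le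
  have hφmem : ∀ t ∈ Set.Icc (0:ℝ) 1, φ t ∈ Set.Icc a b := by
    intro t ht
    constructor
    · calc a = φ 0 := hφ0.symm
        _ ≤ φ t := hφmono ⟨le_refl 0, zero_le_one⟩ ht ht.1
    · calc φ t ≤ φ 1 := hφmono ht ⟨zero_le_one, le_refl 1⟩ ht.2
        _ = b := hφ1
  have hφderiv : ∀ t, HasDerivAt φ (l * φ t) t := by
    intro t
    have h1 : HasDerivAt (fun t : ℝ => l * t) l t := by
      simpa using (hasDerivAt_id t).const_mul l
    have := (h1.exp).const_mul a
    refine this.congr_deriv ?_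
    simp only [hφdef]; ring
  have hφrw : ∀ t, φ t = a ^ (1-t) * b ^ t := by
    intro t
    show a * Real.exp (l * t) = a ^ (1-t) * b ^ t
    rw [Real.rpow_def_of_pos ha0, Real.rpow_def_of_pos hb0, ← Real.exp_add]
    nth_rewrite 1 [show a = Real.exp (Real.log a) from (Real.exp_log ha0).symm]
    rw [← Real.exp_add]
    congr 1
    rw [hldef]; ring
  obtain ⟨hs0, hs1⟩ := hs
  set G : ℝ → ℝ := fun t => φ t * |D (φ t)| with hGdef
  have hG0 : ∀ t, 0 ≤ G t := fun t => mul_nonneg (hφpos t).le (abs_nonneg _)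
  have hGm : Measurable G := (hφcont.measurable).mul
    (((measurable_deriv f).comp hφcont.measurable).abs)
  set α : ℝ := a * |f' a| ^ s with hαdef
  set β : ℝ := b * |f' b| ^ s with hβdef
  have hα0 : 0 ≤ α := mul_nonneg ha0.le (Real.rpow_nonneg (abs_nonneg _) _)
  have hβ0 : 0 ≤ β := mul_nonneg hb0.le (Real.rpow_nonneg (abs_nonneg _) _)
  -- pointwise bound coming from s-geometric convexity
  have hGq : ∀ t ∈ Set.Ioo (0:ℝ) 1, G t ^ q ≤ α ^ (q*(1-t)) * β ^ (q*t) := by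
    intro t ht
    have htIcc : t ∈ Set.Icc (0:ℝ) 1 := ⟨ht.1.le, ht.2.le⟩
    have hxmem : φ t ∈ Set.Icc a b := hφmem t htIcc
    have h1 : |f' (φ t)| ^ q ≤ (|f' a| ^ q) ^ ((1-t) ^ s) * (|f' b| ^ q) ^ (t ^ s) := by
      have hmem1t : (1 - t) ∈ Set.Icc (0:ℝ) 1 := ⟨by linarith [ht.2], by linarith [ht.1]⟩
      have hc := hconv a (Set.left_mem_Icc.2 hab.le) b (Set.right_mem_Icc.2 hab.le)
        (1-t) hmem1t
      simp only at hc
      rw [show (1:ℝ) - (1 - t) = t by ring] at hc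
      rwa [← hφrw t] at hc
    have h2 : (|f' a| ^ q) ^ ((1-t) ^ s) ≤ (|f' a| ^ s) ^ (q * (1-t)) :=
      expo_trick _ (abs_nonneg _) hfa q s (1-t) hq0 hs0 hs1 (by linarith [ht.2])
        (by linarith [ht.1])
    have h3 : (|f' b| ^ q) ^ (t ^ s) ≤ (|f' b| ^ s) ^ (q * t) :=
      expo_trick _ (abs_nonneg _) hfb q s t hq0 hs0 hs1 ht.1 ht.2.le
    have h4 : |f' (φ t)| ^ q ≤ (|f' a| ^ s) ^ (q*(1-t)) * (|f' b| ^ s) ^ (q*t) :=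
      h1.trans (mul_le_mul h2 h3 (Real.rpow_nonneg (Real.rpow_nonneg (abs_nonneg _) _) _)
        (Real.rpow_nonneg (Real.rpow_nonneg (abs_nonneg _) _) _))
    have hD' : |D (φ t)| = |f' (φ t)| := by rw [hDf' _ hxmem]
    have hGq1 : G t ^ q = (φ t) ^ q * |f' (φ t)| ^ q := by
      show (φ t * |D (φ t)|) ^ q = _
      rw [Real.mul_rpow (hφpos t).le (abs_nonneg _), hD']
    have hφq : (φ t) ^ q = a ^ (q*(1-t)) * b ^ (q*t) := by
      rw [hφrw t, Real.mul_rpow (Real.rpow_nonneg ha0.le _) (Real.rpow_nonneg hb0.le _),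
        ← Real.rpow_mul ha0.le, ← Real.rpow_mul hb0.le, mul_comm (1-t) q, mul_comm t q]
    calc G t ^ q = (a ^ (q*(1-t)) * b ^ (q*t)) * |f' (φ t)| ^ q := by rw [hGq1, hφq]
      _ ≤ (a ^ (q*(1-t)) * b ^ (q*t)) * ((|f' a| ^ s) ^ (q*(1-t)) * (|f' b| ^ s) ^ (q*t)) :=
          mul_le_mul_of_nonneg_left h4 (by positivity)
      _ = α ^ (q*(1-t)) * β ^ (q*t) := by
          rw [hαdef, hβdef, Real.mul_rpow ha0.le (Real.rpow_nonneg (abs_nonneg _) _),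
            Real.mul_rpow hb0.le (Real.rpow_nonneg (abs_nonneg _) _)]
          ring
  -- boundedness of G on (0,1)
  set Cb : ℝ := (max 1 (α ^ q) * max 1 (β ^ q)) ^ (1/q) with hCbdef
  have hGC : ∀ t ∈ Set.Ioo (0:ℝ) 1, G t ≤ Cb := by
    intro t ht
    have h1 : G t ^ q ≤ max 1 (α ^ q) * max 1 (β ^ q) :=
      (hGq t ht).trans (bound_le q α β hq0 hα0 hβ0 t ⟨ht.1.le, ht.2.le⟩)
    have h2 := Real.rpow_le_rpow (Real.rpow_nonneg (hG0 t) _) h1 (one_div_nonneg.2 hq0.le)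
    rw [one_div, Real.rpow_rpow_inv (hG0 t) hq0.ne'] at h2
    rwa [hCbdef, one_div]
  -- the derivative of F := f ∘ φ
  set Fd : ℝ → ℝ := fun t => l * φ t * D (φ t) with hFddef
  set F : ℝ → ℝ := fun t => f (φ t) with hFdef
  have hF : ∀ t ∈ Set.Icc (0:ℝ) 1, HasDerivAt F (Fd t) t := by
    intro t ht
    have h := (hD (φ t) (hφmem t ht)).comp t (hφderiv t)
    refine h.congr_deriv ?_
    show _ = l * φ t * D (φ t)
    ring
  have hFdm : Measurable Fd :=
    (measurable_const.mul hφcont.measurable).mul ((measurable_deriv f).comp hφcont.measurable)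
  have hFdint : IntervalIntegrable Fd volume 0 1 := by
    rw [intervalIntegrable_iff_integrableOn_Ioc_of_le zero_le_one,
      integrableOn_Ioc_iff_integrableOn_Ioo]
    apply Integrable.mono' (integrable_const (l * Cb)) hFdm.aestronglyMeasurable.restrict
    filter_upwards [ae_restrict_mem measurableSet_Ioo] with t ht
    have : |Fd t| = l * G t := by
      show |l * φ t * D (φ t)| = l * (φ t * |D (φ t)|)
      rw [abs_mul, abs_mul, abs_of_pos hl, abs_of_pos (hφpos t)]
      ring
    rw [Real.norm_eq_abs, this]
    exact mul_le_mul_of_nonneg_left (hGC t ht) hl.le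
  have hFdint1 : IntervalIntegrable Fd volume 0 (1/2) :=
    hFdint.mono_set (by rw [Set.uIcc_of_le (by norm_num : (0:ℝ) ≤ 1/2),
      Set.uIcc_of_le zero_le_one]; exact Set.Icc_subset_Icc le_rfl (by norm_num))
  have hFdint2 : IntervalIntegrable Fd volume (1/2) 1 :=
    hFdint.mono_set (by rw [Set.uIcc_of_le (by norm_num : (1:ℝ)/2 ≤ 1),
      Set.uIcc_of_le zero_le_one]; exact Set.Icc_subset_Icc (by norm_num) le_rfl)
  have hFcont : ContinuousOn F (Set.Icc (0:ℝ) 1) :=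
    fun t ht => (hF t ht).continuousAt.continuousWithinAt
  have hFint1 : IntervalIntegrable F volume 0 (1/2) := by
    apply ContinuousOn.intervalIntegrable
    rw [Set.uIcc_of_le (by norm_num : (0:ℝ) ≤ 1/2)]
    exact hFcont.mono (Set.Icc_subset_Icc le_rfl (by norm_num))
  have hFint2 : IntervalIntegrable F volume (1/2) 1 := by
    apply ContinuousOn.intervalIntegrable
    rw [Set.uIcc_of_le (by norm_num : (1:ℝ)/2 ≤ 1)]
    exact hFcont.mono (Set.Icc_subset_Icc (by norm_num) le_rfl)
  -- integration by parts on the two halves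
  have hibp1 : ∫ t in (0:ℝ)..(1/2), t * Fd t
      = (1/2) * F (1/2) - ∫ t in (0:ℝ)..(1/2), F t := by
    have h := intervalIntegral.integral_mul_deriv_eq_deriv_mul
      (u := fun t : ℝ => t) (u' := fun _ => (1:ℝ)) (v := F) (v' := Fd)
      (fun t _ => hasDerivAt_id t)
      (fun t ht => hF t (by
        rw [Set.uIcc_of_le (by norm_num : (0:ℝ) ≤ 1/2)] at ht
        exact ⟨ht.1, by linarith [ht.2]⟩))
      intervalIntegrable_const hFdint1
    simp only [one_mul] at h
    rw [h]; ring
  have hibp2 : ∫ t in (1/2:ℝ)..1, (t - 1) * Fd t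
      = (1/2) * F (1/2) - ∫ t in (1/2:ℝ)..1, F t := by
    have h := intervalIntegral.integral_mul_deriv_eq_deriv_mul
      (u := fun t : ℝ => t - 1) (u' := fun _ => (1:ℝ)) (v := F) (v' := Fd)
      (fun t _ => (hasDerivAt_id t).sub_const 1)
      (fun t ht => hF t (by
        rw [Set.uIcc_of_le (by norm_num : (1:ℝ)/2 ≤ 1)] at ht
        exact ⟨by linarith [ht.1], ht.2⟩))
      intervalIntegrable_const hFdint2
    simp only [one_mul] at h
    rw [h]; ring
  have hsplitF : ∫ t in (0:ℝ)..1, F t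
      = (∫ t in (0:ℝ)..(1/2), F t) + ∫ t in (1/2:ℝ)..1, F t :=
    (intervalIntegral.integral_add_adjacent_intervals hFint1 hFint2).symm
  have hiden : F (1/2) - ∫ t in (0:ℝ)..1, F t
      = (∫ t in (0:ℝ)..(1/2), t * Fd t) + ∫ t in (1/2:ℝ)..1, (t - 1) * Fd t := by
    rw [hibp1, hibp2, hsplitF]; ring
  -- change of variables for the main integral
  have hgcont : ContinuousOn (fun x => f x / x) (Set.Icc a b) := by
    apply ContinuousOn.div
    · exact fun x hx => ((hD x hx).continuousAt).continuousWithinAt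
    · exact continuousOn_id
    · exact fun x hx => ne_of_gt (lt_of_lt_of_le ha0 hx.1)
  have hsubst : ∫ x in a..b, f x / x = l * ∫ t in (0:ℝ)..1, F t := by
    have himg : φ '' (Set.uIcc 0 1) ⊆ Set.Icc a b := by
      rw [Set.uIcc_of_le zero_le_one]
      rintro x ⟨t, ht, rfl⟩
      exact hφmem t ht
    have h := intervalIntegral.integral_comp_smul_deriv' (a := (0:ℝ)) (b := 1)
      (f := φ) (f' := fun t => l * φ t) (g := fun x => f x / x)
      (fun t _ => hφderiv t)
      ((continuous_const.mul hφcont).continuousOn)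
      (hgcont.mono himg)
    rw [hφ0, hφ1] at h
    rw [← h]
    rw [← intervalIntegral.integral_const_mul]
    apply intervalIntegral.integral_congr
    intro t _
    show (l * φ t) • (f (φ t) / φ t) = l * f (φ t)
    rw [smul_eq_mul]
    field_simp [(hφpos t).ne']
  have hmain : f (Real.sqrt (a*b)) - (1/l) * ∫ x in a..b, f x / x
      = F (1/2) - ∫ t in (0:ℝ)..1, F t := by
    rw [hsubst]
    have : (1/l) * (l * ∫ t in (0:ℝ)..1, F t) = ∫ t in (0:ℝ)..1, F t := by
      field_simp
    rw [this]
    congr 1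
    show f (Real.sqrt (a*b)) = f (φ (1/2))
    rw [hφhalf]
  -- estimates on the absolute values
  have habs1 : |∫ t in (0:ℝ)..(1/2), t * Fd t| ≤ ∫ t in (0:ℝ)..(1/2), |t * Fd t| :=
    intervalIntegral.abs_integral_le_integral_abs (by norm_num)
  have habs2 : |∫ t in (1/2:ℝ)..1, (t - 1) * Fd t| ≤ ∫ t in (1/2:ℝ)..1, |(t - 1) * Fd t| :=
    intervalIntegral.abs_integral_le_integral_abs (by norm_num)
  have hFdabs : ∀ t, |Fd t| = l * G t := by
    intro t
    show |l * φ t * D (φ t)| = l * (φ t * |D (φ t)|)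
    rw [abs_mul, abs_mul, abs_of_pos hl, abs_of_pos (hφpos t)]
    ring
  have he1 : ∫ t in (0:ℝ)..(1/2), |t * Fd t| = l * ∫ t in (0:ℝ)..(1/2), t * G t := by
    rw [← intervalIntegral.integral_const_mul]
    apply intervalIntegral.integral_congr
    intro t ht
    rw [Set.uIcc_of_le (by norm_num : (0:ℝ) ≤ 1/2)] at ht
    show |t * Fd t| = l * (t * G t)
    rw [abs_mul, abs_of_nonneg ht.1, hFdabs t]
    ring
  have he2 : ∫ t in (1/2:ℝ)..1, |(t - 1) * Fd t| = l * ∫ t in (1/2:ℝ)..1, (1 - t) * G t := by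
    rw [← intervalIntegral.integral_const_mul]
    apply intervalIntegral.integral_congr
    intro t ht
    rw [Set.uIcc_of_le (by norm_num : (1:ℝ)/2 ≤ 1)] at ht
    show |(t - 1) * Fd t| = l * ((1 - t) * G t)
    rw [abs_mul, abs_of_nonpos (by linarith [ht.2] : t - 1 ≤ 0), hFdabs t]
    ring
  have hrefl : ∫ t in (1/2:ℝ)..1, (1 - t) * G t = ∫ t in (0:ℝ)..(1/2), t * G (1 - t) := by
    have h := intervalIntegral.integral_comp_sub_left (a := (0:ℝ)) (b := 1/2)
      (fun u => (1 - u) * G u) 1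
    norm_num at h
    exact h.symm
  -- applying the key estimate twice
  have k1 : ∫ t in (0:ℝ)..(1/2), t * G t ≤
      (1/2:ℝ) ^ ((3:ℝ) - 1/q) * (α * (g₁ ((β/α) ^ (q/2))) ^ (1/q)) :=
    key q hq α β hα0 hβ0 G hGm hG0
      (fun t ht => hGq t ⟨ht.1, by linarith [ht.2]⟩)
  have k2 : ∫ t in (0:ℝ)..(1/2), t * G (1 - t) ≤
      (1/2:ℝ) ^ ((3:ℝ) - 1/q) * (β * (g₁ ((α/β) ^ (q/2))) ^ (1/q)) := by
    apply key q hq β α hβ0 hα0 (fun t => G (1 - t))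
      (hGm.comp (measurable_const.sub measurable_id)) (fun t => hG0 _)
    intro t ht
    have h := hGq (1 - t) ⟨by linarith [ht.2], by linarith [ht.1]⟩
    calc G (1 - t) ^ q ≤ α ^ (q*(1-(1-t))) * β ^ (q*(1-t)) := h
      _ = β ^ (q*(1-t)) * α ^ (q*t) := by rw [show (1:ℝ)-(1-t) = t by ring]; ring
  -- final assembly
  rw [hlog]
  calc |f (Real.sqrt (a * b)) - 1 / l * ∫ x in a..b, f x / x|
      = |F (1/2) - ∫ t in (0:ℝ)..1, F t| := by rw [hmain]
    _ = |(∫ t in (0:ℝ)..(1/2), t * Fd t) + ∫ t in (1/2:ℝ)..1, (t - 1) * Fd t| := by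
        rw [hiden]
    _ ≤ |∫ t in (0:ℝ)..(1/2), t * Fd t| + |∫ t in (1/2:ℝ)..1, (t - 1) * Fd t| := abs_add_le _ _
    _ ≤ (∫ t in (0:ℝ)..(1/2), |t * Fd t|) + ∫ t in (1/2:ℝ)..1, |(t - 1) * Fd t| :=
        add_le_add habs1 habs2
    _ = l * (∫ t in (0:ℝ)..(1/2), t * G t) + l * ∫ t in (0:ℝ)..(1/2), t * G (1 - t) := by
        rw [he1, he2, hrefl]
    _ ≤ l * ((1/2:ℝ) ^ ((3:ℝ) - 1/q) * (α * (g₁ ((β/α) ^ (q/2))) ^ (1/q)))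
        + l * ((1/2:ℝ) ^ ((3:ℝ) - 1/q) * (β * (g₁ ((α/β) ^ (q/2))) ^ (1/q))) :=
        add_le_add (mul_le_mul_of_nonneg_left k1 hl.le) (mul_le_mul_of_nonneg_left k2 hl.le)
    _ = l * (1/2:ℝ) ^ ((3:ℝ) - 1/q) *
        (α * (g₁ ((β/α) ^ (q/2))) ^ (1/q) + β * (g₁ ((α/β) ^ (q/2))) ^ (1/q)) := by ring
end
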